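/- Let J : ℚ_p^n → ℝ_{≥0} be a continuous radial function with ∫ J(‖x‖_p) d^n x = 1, and let J_N(‖x‖_p) = J(‖x‖_p)·Ω(p^{-N}‖x‖_p) be its truncation to the ball B_N^n. Then for any φ ∈ X_∞ and any N ≥ 1, the convolution satisfies (J_N * P_N φ)(x) = Ω(p^{-N}‖x‖_p)·(J * P_N φ)(x); i.e., the truncated convolution equals the restriction to B_N^n of the full convolution. -/

import Mathlib

open scoped ZeroAtInfty
open MeasureTheory

/-- Ultrametric inequality for the sup norm on `Fin n → ℚ_[p]`. -/
lemma stmt8_norm_add_le_max (p : ℕ) [Fact p.Prime] (n : ℕ) (a b : Fin n → ℚ_[p]) :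
    ‖a + b‖ ≤ max ‖a‖ ‖b‖ := by
  apply pi_norm_le_iff_of_nonneg (le_max_of_le_left (norm_nonneg _)) |>.2
  intro i
  calc ‖a i + b i‖ ≤ max ‖a i‖ ‖b i‖ := Padic.nonarchimedean _ _
    _ ≤ max ‖a‖ ‖b‖ := max_le_max (norm_le_pi_norm a i) (norm_le_pi_norm b i)

/-- The truncated convolution `J_N * P_N φ` equals the restriction to `B_N^n` of the full
convolution `J * P_N φ`, where `J_N(‖x‖) = J(‖x‖)·Ω(p^{-N}‖x‖)` and
`P_N φ = Σ_{i ∈ G_N} φ(i)·Ω(p^N ‖x - i‖)`. -/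
theorem stmt8 (p : ℕ) [Fact p.Prime] (n : ℕ)
    [MeasurableSpace (Fin n → ℚ_[p])] [BorelSpace (Fin n → ℚ_[p])]
    (μ : Measure (Fin n → ℚ_[p])) [μ.IsAddHaarMeasure]
    (hμ : μ (Metric.closedBall 0 1) = 1)
    (J : ℝ → ℝ)
    (hJc : Continuous fun x : Fin n → ℚ_[p] => J ‖x‖)
    (hJ0 : ∀ x : Fin n → ℚ_[p], 0 ≤ J ‖x‖)
    (hJ1 : ∫ x, J ‖x‖ ∂μ = 1)
    (N : ℕ) (hN : 1 ≤ N)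
    (G : Finset (Fin n → ℚ_[p]))
    (hGmem : ∀ i ∈ G, ‖i‖ ≤ (p : ℝ) ^ (N : ℤ))
    (hGsep : ∀ i ∈ G, ∀ j ∈ G, i ≠ j → (p : ℝ) ^ (-(N : ℤ)) < ‖i - j‖)
    (hGcov : ∀ x : Fin n → ℚ_[p], ‖x‖ ≤ (p : ℝ) ^ (N : ℤ) →
      ∃ i ∈ G, ‖x - i‖ ≤ (p : ℝ) ^ (-(N : ℤ)))
    (φ : C₀(Fin n → ℚ_[p], ℝ)) (x : Fin n → ℚ_[p]) :
    (∫ y, (J ‖x - y‖ * (if ‖x - y‖ ≤ (p : ℝ) ^ (N : ℤ) then (1 : ℝ) else 0)) *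
        (∑ i ∈ G, φ i * (if ‖y - i‖ ≤ (p : ℝ) ^ (-(N : ℤ)) then (1 : ℝ) else 0)) ∂μ)
      = (if ‖x‖ ≤ (p : ℝ) ^ (N : ℤ) then (1 : ℝ) else 0) *
        ∫ y, J ‖x - y‖ *
          (∑ i ∈ G, φ i * (if ‖y - i‖ ≤ (p : ℝ) ^ (-(N : ℤ)) then (1 : ℝ) else 0)) ∂μ := by
  have hp1 : (1 : ℝ) ≤ (p : ℝ) := by exact_mod_cast (Fact.out : p.Prime).one_le
  have hsmall : (p : ℝ) ^ (-(N : ℤ)) ≤ (p : ℝ) ^ (N : ℤ) :=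
    zpow_le_zpow_right₀ hp1 (by omega)
  -- If the sampled sum at y is nonzero, then ‖y‖ ≤ p^N
  have hSsupp : ∀ y : Fin n → ℚ_[p],
      (∑ i ∈ G, φ i * (if ‖y - i‖ ≤ (p : ℝ) ^ (-(N : ℤ)) then (1 : ℝ) else 0)) ≠ 0 →
      ‖y‖ ≤ (p : ℝ) ^ (N : ℤ) := by
    intro y hy
    obtain ⟨i, hiG, hterm⟩ : ∃ i ∈ G,
        φ i * (if ‖y - i‖ ≤ (p : ℝ) ^ (-(N : ℤ)) then (1 : ℝ) else 0) ≠ 0 := by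
      by_contra h
      push_neg at h
      exact hy (Finset.sum_eq_zero h)
    have hle : ‖y - i‖ ≤ (p : ℝ) ^ (-(N : ℤ)) := by
      by_contra h
      rw [if_neg h, mul_zero] at hterm
      exact hterm rfl
    calc ‖y‖ = ‖(y - i) + i‖ := by ring_nf
      _ ≤ max ‖y - i‖ ‖i‖ := stmt8_norm_add_le_max p n _ _
      _ ≤ (p : ℝ) ^ (N : ℤ) := max_le (hle.trans hsmall) (hGmem i hiG)
  by_cases hx : ‖x‖ ≤ (p : ℝ) ^ (N : ℤ)
  · rw [if_pos hx, one_mul]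
    congr 1
    funext y
    by_cases hS : (∑ i ∈ G, φ i * (if ‖y - i‖ ≤ (p : ℝ) ^ (-(N : ℤ)) then (1 : ℝ) else 0)) = 0
    · rw [hS, mul_zero, mul_zero]
    · have hxy : ‖x - y‖ ≤ (p : ℝ) ^ (N : ℤ) := by
        calc ‖x - y‖ = ‖x + (-y)‖ := by ring_nf
          _ ≤ max ‖x‖ ‖-y‖ := stmt8_norm_add_le_max p n _ _
          _ ≤ (p : ℝ) ^ (N : ℤ) := by
              rw [norm_neg]; exact max_le hx (hSsupp y hS)
      rw [if_pos hxy, mul_one]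
  · rw [if_neg hx, zero_mul]
    have h0 : (fun y => (J ‖x - y‖ * (if ‖x - y‖ ≤ (p : ℝ) ^ (N : ℤ) then (1 : ℝ) else 0)) *
        (∑ i ∈ G, φ i * (if ‖y - i‖ ≤ (p : ℝ) ^ (-(N : ℤ)) then (1 : ℝ) else 0)))
        = fun _ : Fin n → ℚ_[p] => (0 : ℝ) := by
      funext y
      by_cases hS : (∑ i ∈ G, φ i * (if ‖y - i‖ ≤ (p : ℝ) ^ (-(N : ℤ)) then (1 : ℝ) else 0)) = 0
      · rw [hS, mul_zero]
      · have hy : ‖y‖ ≤ (p : ℝ) ^ (N : ℤ) := hSsupp y hS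
        have hxy : ¬ ‖x - y‖ ≤ (p : ℝ) ^ (N : ℤ) := by
          intro h
          apply hx
          calc ‖x‖ = ‖(x - y) + y‖ := by ring_nf
            _ ≤ max ‖x - y‖ ‖y‖ := stmt8_norm_add_le_max p n _ _
            _ ≤ (p : ℝ) ^ (N : ℤ) := max_le h hy
        rw [if_neg hxy, mul_zero, zero_mul]
    rw [h0, integral_zero]
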